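/- CDH extraction, Case 2 of the proof of Theorem 1: Let a, b, α, β, x, h, h' : ZMod q with h ≠ h', x ≠ 0 and β ≠ 0, and set P₀ = a•P, Pk_s = x•(a•P), U = β•(b•P), Q_s = α•P. If V, V' : G₁ satisfy e(V - V', P) = e((h - h')•Pk_s, U) · e((h - h')•Q_s, P₀), then (a*b)•P = (x*β)⁻¹•((h - h')⁻¹•(V - V') - α•P₀). -/

import Mathlib

theorem clring_cdh_extraction_case2
    {q : ℕ} [Fact (Nat.Prime q)]
    {G₁ : Type*} [AddCommGroup G₁] [Module (ZMod q) G₁]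
    {G₂ : Type*} [CommGroup G₂]
    (P : G₁) (e : G₁ → G₁ → G₂)
    (e_add_left : ∀ x y z : G₁, e (x + y) z = e x z * e y z)
    (e_add_right : ∀ x y z : G₁, e x (y + z) = e x y * e x z)
    (e_smul : ∀ (a : ZMod q) (x y : G₁), e (a • x) y = e x (a • y))
    (e_nd : ∀ x : G₁, e x P = 1 → x = 0)
    (a b α β x h h' : ZMod q) (hne : h ≠ h') (hx : x ≠ 0) (hβ : β ≠ 0)
    (P₀ Pk_s U Q_s : G₁)
    (hP₀ : P₀ = a • P) (hPk : Pk_s = x • (a • P)) (hU : U = β • (b • P))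
    (hQs : Q_s = α • P)
    (V V' : G₁)
    (heq : e (V - V') P = e ((h - h') • Pk_s) U * e ((h - h') • Q_s) P₀) :
    (a * b) • P = (x * β)⁻¹ • ((h - h')⁻¹ • (V - V') - α • P₀) := by
  have hhd : h - h' ≠ 0 := sub_ne_zero.mpr hne
  have e0 : e 0 P = 1 := by
    have h1 := e_add_left 0 0 P
    simp only [add_zero] at h1
    exact (mul_eq_left.mp h1.symm)
  have pair_smul : ∀ s t : ZMod q, e (s • P) (t • P) = e ((s * t) • P) P := by
    intro s t
    rw [e_smul s, e_smul (s * t), smul_smul]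
  -- rewrite RHS of heq
  have hr1 : e ((h - h') • Pk_s) U = e (((h - h') * (x * a) * (β * b)) • P) P := by
    rw [hPk, hU, smul_smul, smul_smul, smul_smul, pair_smul]; ring_nf
  have hr2 : e ((h - h') • Q_s) P₀ = e (((h - h') * α * a) • P) P := by
    rw [hQs, hP₀, smul_smul, pair_smul]
  set c : ZMod q := (h - h') * (x * a) * (β * b) + (h - h') * α * a with hc
  have heq' : e (V - V') P = e (c • P) P := by
    rw [heq, hr1, hr2, ← e_add_left, ← add_smul]
  have hneg : ∀ w : G₁, e (-w) P = (e w P)⁻¹ := by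
    intro w
    have h1 := e_add_left w (-w) P
    simp only [add_neg_cancel] at h1
    rw [e0] at h1
    exact eq_inv_of_mul_eq_one_right h1.symm
  have hkey : V - V' = c • P := by
    have : e (V - V' - c • P) P = 1 := by
      rw [sub_eq_add_neg, e_add_left, hneg, heq', mul_inv_cancel]
    exact sub_eq_zero.mp (e_nd _ this)
  rw [hkey, hP₀, smul_smul, smul_smul, ← sub_smul, smul_smul]
  congr 1
  field_simp
  ring
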